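/- Fix n ≥ 0. Let D(n) be the poset whose elements are the nonempty finite chains of nonempty subsets of {0, …, n} (finite nonempty sets of nonempty subsets of {0, …, n} that are totally ordered by strict inclusion), ordered by inclusion of chains, and let B(n) be the subposet of D(n) consisting of those chains that do not contain the full set {0, …, n} as an element; B(n) is a sieve in D(n). Let A be the six-element poset {a₁, a₂, b₁, b₂, c₁, c₂} in which aᵢ < bⱼ and bⱼ < cₖ (hence aᵢ < cₖ) for all i, j, k ∈ {1, 2}, and there are no other strict relations. Then for every poset X, every monotone map f : B(n) → X, and every pushout square in the category of partial orders and monotone maps formed from the inclusion B(n) → D(n) and f, with pushout corner Y: if A is a retract of Y (there are monotone maps i : A → Y and ρ : Y → A with ρ ∘ i = id_A), then A is a retract of X. -/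

import Mathlib

/-!
Statement 14: the retract criterion showing the six-element model `A` of the
2-sphere is not cofibrant: for every pushout of a generating cofibration
`Π Sd² ∂Δ[n] → Π Sd² Δ[n]` along a map `f : Π Sd² ∂Δ[n] → X` with pushout
corner `Y`, if `A` is a retract of `Y` then `A` is a retract of `X`.
-/

universe u v

/-- The poset `D(n) = Π Sd² Δ[n]`: nonempty finite chains (under strict
inclusion) of nonempty subsets of `{0, …, n}`, ordered by inclusion of chains. -/
abbrev SdChain (n : ℕ) : Type :=
  {S : Finset (Finset (Fin (n + 1))) //
    S.Nonempty ∧ (∀ T ∈ S, T.Nonempty) ∧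
      IsChain (· ⊂ ·) (S : Set (Finset (Fin (n + 1))))}

/-- The sieve `B(n) = Π Sd² ∂Δ[n]` of chains not containing the full set. -/
def SdBoundary (n : ℕ) : Set (SdChain n) :=
  {S | (Finset.univ : Finset (Fin (n + 1))) ∉ S.1}

/-- The six element poset `A` with `aᵢ < bⱼ < cₖ`, a model of the 2-sphere. -/
inductive A6 : Type
  | a1 | a2 | b1 | b2 | c1 | c2
  deriving DecidableEq

instance : Fintype A6 where
  elems := {.a1, .a2, .b1, .b2, .c1, .c2}
  complete x := by cases x <;> decide

/-- Rank: `a`'s have rank 0, `b`'s rank 1, `c`'s rank 2. -/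
def A6.rank : A6 → ℕ
  | .a1 => 0 | .a2 => 0 | .b1 => 1 | .b2 => 1 | .c1 => 2 | .c2 => 2

/-- The order on `A`: `x ≤ y` iff `x = y` or `rank x < rank y`. -/
instance : PartialOrder A6 where
  le x y := x = y ∨ x.rank < y.rank
  le_refl x := Or.inl rfl
  le_trans a b c hab hbc := by
    rcases hab with rfl | h1
    · exact hbc
    · rcases hbc with rfl | h2
      · exact Or.inr h1
      · exact Or.inr (h1.trans h2)
  le_antisymm a b hab hba := by
    rcases hab with rfl | h1
    · rfl
    · rcases hba with rfl | h2
      · rfl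
      · exact absurd (h1.trans h2) (lt_irrefl _)


structure DProp : Type u where
  prop : Prop

instance : PartialOrder DProp.{u} where
  le a b := b.prop → a.prop
  le_refl _ h := h
  le_trans _ _ _ h1 h2 h := h1 (h2 h)
  le_antisymm a b h1 h2 := by
    cases a; cases b
    exact congrArg DProp.mk (propext ⟨fun h => h2 h, fun h => h1 h⟩)

lemma DProp.le_def {a b : DProp.{u}} : a ≤ b ↔ (b.prop → a.prop) := Iff.rfl

lemma A6.le_iff {x y : A6} : x ≤ y ↔ (x = y ∨ x.rank < y.rank) := Iff.rfl

instance : DecidableRel (α := A6) (· ≤ ·) := fun x y =>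
  decidable_of_iff _ A6.le_iff.symm

lemma A6.sand1 : ∀ w t : A6, t.rank = 1 → A6.a1 ≤ w → A6.a2 ≤ w → w ≤ t → w = t := by decide
lemma A6.sand2 : ∀ w t : A6, t.rank = 2 → A6.b1 ≤ w → A6.b2 ≤ w → w ≤ t → w = t := by decide
lemma A6.nopair : ∀ w : A6, A6.b1 ≤ w → A6.b2 ≤ w → w ≤ A6.c1 → w ≤ A6.c2 → False := by decide
lemma A6.a1_le {t : A6} (h : t.rank = 1) : A6.a1 ≤ t := A6.le_iff.mpr (Or.inr (by rw [h]; decide))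
lemma A6.a2_le {t : A6} (h : t.rank = 1) : A6.a2 ≤ t := A6.le_iff.mpr (Or.inr (by rw [h]; decide))
lemma A6.b1_le {t : A6} (h : t.rank = 2) : A6.b1 ≤ t := A6.le_iff.mpr (Or.inr (by rw [h]; decide))
lemma A6.b2_le {t : A6} (h : t.rank = 2) : A6.b2 ≤ t := A6.le_iff.mpr (Or.inr (by rw [h]; decide))
lemma A6.a1_le_b1 : A6.a1 ≤ A6.b1 := by decide
lemma A6.a1_le_b2 : A6.a1 ≤ A6.b2 := by decide
lemma A6.a2_le_b1 : A6.a2 ≤ A6.b1 := by decide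
lemma A6.a2_le_b2 : A6.a2 ≤ A6.b2 := by decide
lemma A6.b1_le_c1 : A6.b1 ≤ A6.c1 := by decide
lemma A6.b1_le_c2 : A6.b1 ≤ A6.c2 := by decide
lemma A6.b2_le_c1 : A6.b2 ≤ A6.c1 := by decide
lemma A6.b2_le_c2 : A6.b2 ≤ A6.c2 := by decide

lemma A6.monotone_mk {X : Type*} [Preorder X] (F : A6 → X)
    (h11 : F .a1 ≤ F .b1) (h12 : F .a1 ≤ F .b2) (h21 : F .a2 ≤ F .b1) (h22 : F .a2 ≤ F .b2)
    (g11 : F .b1 ≤ F .c1) (g12 : F .b1 ≤ F .c2) (g21 : F .b2 ≤ F .c1) (g22 : F .b2 ≤ F .c2) :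
    Monotone F := by
  intro x y hxy
  rcases A6.le_iff.mp hxy with rfl | h
  · exact le_rfl
  · cases x <;> cases y <;> simp [A6.rank] at h <;>
      first
        | exact h11 | exact h12 | exact h21 | exact h22
        | exact g11 | exact g12 | exact g21 | exact g22
        | exact h11.trans g11 | exact h11.trans g12
        | exact h21.trans g11 | exact h21.trans g12

def SdChain.cup {n : ℕ} (s t d : SdChain n) (hs : s.1 ⊆ d.1) (ht : t.1 ⊆ d.1) : SdChain n := by
  refine ⟨s.1 ∪ t.1, ?_, ?_, ?_⟩
  · exact s.2.1.mono Finset.subset_union_left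
  · intro T hT
    rcases Finset.mem_union.1 hT with h | h
    · exact s.2.2.1 T h
    · exact t.2.2.1 T h
  · exact IsChain.mono (Finset.coe_subset.2 (Finset.union_subset hs ht)) d.2.2.2

lemma SdChain.le_cup_left {n : ℕ} (s t d : SdChain n) (hs : s.1 ⊆ d.1) (ht : t.1 ⊆ d.1) :
    s ≤ SdChain.cup s t d hs ht := by
  show s.1 ⊆ s.1 ∪ t.1
  exact Finset.subset_union_left

lemma SdChain.le_cup_right {n : ℕ} (s t d : SdChain n) (hs : s.1 ⊆ d.1) (ht : t.1 ⊆ d.1) :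
    t ≤ SdChain.cup s t d hs ht := by
  show t.1 ⊆ s.1 ∪ t.1
  exact Finset.subset_union_right

lemma SdChain.cup_le {n : ℕ} {s t d e : SdChain n} (hs : s.1 ⊆ d.1) (ht : t.1 ⊆ d.1)
    (h1 : s.1 ⊆ e.1) (h2 : t.1 ⊆ e.1) : SdChain.cup s t d hs ht ≤ e := by
  show s.1 ∪ t.1 ⊆ e.1
  exact Finset.union_subset h1 h2

lemma SdChain.cup_mem_boundary {n : ℕ} {s t d : SdChain n} (hs : s.1 ⊆ d.1) (ht : t.1 ⊆ d.1)
    (hs' : s ∈ SdBoundary n) (ht' : t ∈ SdBoundary n) :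
    SdChain.cup s t d hs ht ∈ SdBoundary n := by
  intro hmem
  rcases Finset.mem_union.1 hmem with h | h
  · exact hs' h
  · exact ht' h

lemma SdChain.subset_of_le {n : ℕ} {s t : SdChain n} (h : s ≤ t) : s.1 ⊆ t.1 := h

lemma SdBoundary.not_mem_univ {n : ℕ} {d : SdChain n} (h : d ∈ SdBoundary n) :
    (Finset.univ : Finset (Fin (n+1))) ∉ d.1 := h

theorem statement14 (n : ℕ) (X : Type u) [PartialOrder X]
    (f : SdBoundary n → X) (hf : Monotone f)
    -- a pushout square of posets formed from the inclusion `B(n) → D(n)` and `f`,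
    -- with pushout corner `Y`
    (Y : Type u) [PartialOrder Y] (g : SdChain n → Y) (k : X → Y)
    (hg : Monotone g) (hk : Monotone k)
    (hcomm : ∀ S : SdBoundary n, g (S : SdChain n) = k (f S))
    (huniv : ∀ (Z : Type v) [PartialOrder Z] (u : SdChain n → Z) (v : X → Z),
      Monotone u → Monotone v → (∀ S : SdBoundary n, u (S : SdChain n) = v (f S)) →
      ∃! t : Y → Z, Monotone t ∧ (∀ d : SdChain n, t (g d) = u d) ∧
        (∀ x : X, t (k x) = v x))
    -- if `A` is a retract of `Y` ...
    (i : A6 → Y) (ρ : Y → A6) (hi : Monotone i) (hρ : Monotone ρ)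
    (hretr : ∀ x : A6, ρ (i x) = x) :
    -- ... then `A` is a retract of `X`
    ∃ (i' : A6 → X) (ρ' : X → A6),
      Monotone i' ∧ Monotone ρ' ∧ ∀ x : A6, ρ' (i' x) = x := by
  classical
  have hgB : ∀ (b : SdChain n) (hb : b ∈ SdBoundary n), g b = k (f ⟨b, hb⟩) :=
    fun b hb => hcomm ⟨b, hb⟩
  -- Detector A: for each x' : X, detects what is below k x'.
  have detA : ∀ x' : X, ∃ t : Y → DProp.{v}, Monotone t ∧
      (∀ d : SdChain n, t (g d) = ⟨∃ hd : d ∈ SdBoundary n, f ⟨d, hd⟩ ≤ x'⟩) ∧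
      (∀ x : X, t (k x) = ⟨x ≤ x'⟩) := by
    intro x'
    have hu : Monotone (fun d : SdChain n =>
        (⟨∃ hd : d ∈ SdBoundary n, f ⟨d, hd⟩ ≤ x'⟩ : DProp.{v})) := by
      intro d d' hdd'
      refine DProp.le_def.mpr ?_
      rintro ⟨hd', hle⟩
      have hmem : d ∈ SdBoundary n := fun hu' => hd' (SdChain.subset_of_le hdd' hu')
      exact ⟨hmem, le_trans (hf (Subtype.mk_le_mk.mpr hdd')) hle⟩
    have hv : Monotone (fun x : X => (⟨x ≤ x'⟩ : DProp.{v})) := by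
      intro x1 x2 h
      exact DProp.le_def.mpr fun h' => le_trans h h'
    have hcpt : ∀ S : SdBoundary n,
        (⟨∃ hd : (S : SdChain n) ∈ SdBoundary n, f ⟨(S : SdChain n), hd⟩ ≤ x'⟩ : DProp.{v})
          = ⟨f S ≤ x'⟩ := by
      intro S
      exact congrArg DProp.mk (propext ⟨fun ⟨hd, h⟩ => h, fun h => ⟨S.2, h⟩⟩)
    obtain ⟨t, ht, -⟩ := huniv DProp.{v} _ _ hu hv hcpt
    exact ⟨t, ht⟩
  have hkle : ∀ {x x' : X}, k x ≤ k x' → x ≤ x' := by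
    intro x x' hxx'
    obtain ⟨t, ht, hg', hk'⟩ := detA x'
    have h2 := ht hxx'
    rw [hk', hk'] at h2
    exact DProp.le_def.mp h2 le_rfl
  have hgk : ∀ {d : SdChain n} {x' : X}, g d ≤ k x' → d ∈ SdBoundary n := by
    intro d x' hdx
    obtain ⟨t, ht, hg', hk'⟩ := detA x'
    have h2 := ht hdx
    rw [hg', hk'] at h2
    exact (DProp.le_def.mp h2 le_rfl).1
  -- Detector B: for each d0, detects what is below g d0.
  have detB : ∀ d0 : SdChain n, ∃ t : Y → DProp.{v}, Monotone t ∧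
      (∀ d : SdChain n, t (g d) = ⟨d ≤ d0 ∨ ∃ hd : d ∈ SdBoundary n, ∃ b : SdChain n,
          ∃ hb : b ∈ SdBoundary n, b ≤ d0 ∧ f ⟨d, hd⟩ ≤ f ⟨b, hb⟩⟩) ∧
      (∀ x : X, t (k x) = ⟨∃ b : SdChain n, ∃ hb : b ∈ SdBoundary n, b ≤ d0 ∧ x ≤ f ⟨b, hb⟩⟩) := by
    intro d0
    have hu : Monotone (fun d : SdChain n =>
        (⟨d ≤ d0 ∨ ∃ hd : d ∈ SdBoundary n, ∃ b : SdChain n,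
          ∃ hb : b ∈ SdBoundary n, b ≤ d0 ∧ f ⟨d, hd⟩ ≤ f ⟨b, hb⟩⟩ : DProp.{v})) := by
      intro d d' hdd'
      refine DProp.le_def.mpr ?_
      rintro (h | ⟨hd', b, hb, hbd0, hle⟩)
      · exact Or.inl (le_trans hdd' h)
      · refine Or.inr ⟨fun hu' => hd' (SdChain.subset_of_le hdd' hu'), b, hb, hbd0, ?_⟩
        exact le_trans (hf (Subtype.mk_le_mk.mpr hdd')) hle
    have hv : Monotone (fun x : X =>
        (⟨∃ b : SdChain n, ∃ hb : b ∈ SdBoundary n, b ≤ d0 ∧ x ≤ f ⟨b, hb⟩⟩ : DProp.{v})) := by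
      intro x1 x2 h
      refine DProp.le_def.mpr ?_
      rintro ⟨b, hb, hbd0, hle⟩
      exact ⟨b, hb, hbd0, le_trans h hle⟩
    have hcpt : ∀ S : SdBoundary n,
        (⟨(S : SdChain n) ≤ d0 ∨ ∃ hd : (S : SdChain n) ∈ SdBoundary n, ∃ b : SdChain n,
          ∃ hb : b ∈ SdBoundary n, b ≤ d0 ∧ f ⟨(S : SdChain n), hd⟩ ≤ f ⟨b, hb⟩⟩ : DProp.{v})
        = ⟨∃ b : SdChain n, ∃ hb : b ∈ SdBoundary n, b ≤ d0 ∧ f S ≤ f ⟨b, hb⟩⟩ := by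
      intro S
      refine congrArg DProp.mk (propext ⟨?_, ?_⟩)
      · rintro (h | ⟨hd, b, hb, hbd0, hle⟩)
        · exact ⟨(S : SdChain n), S.2, h, le_rfl⟩
        · exact ⟨b, hb, hbd0, hle⟩
      · rintro ⟨b, hb, hbd0, hle⟩
        exact Or.inr ⟨S.2, b, hb, hbd0, hle⟩
    obtain ⟨t, ht, -⟩ := huniv DProp.{v} _ _ hu hv hcpt
    exact ⟨t, ht⟩
  have hkg : ∀ {x : X} {d0 : SdChain n}, k x ≤ g d0 →
      ∃ b : SdChain n, ∃ hb : b ∈ SdBoundary n, b ≤ d0 ∧ x ≤ f ⟨b, hb⟩ := by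
    intro x d0 h
    obtain ⟨t, ht, hg', hk'⟩ := detB d0
    have h2 := ht h
    rw [hg', hk'] at h2
    exact DProp.le_def.mp h2 (Or.inl le_rfl)
  have hgg : ∀ {d d0 : SdChain n}, g d ≤ g d0 → d ∉ SdBoundary n → d ≤ d0 := by
    intro d d0 h hd
    obtain ⟨t, ht, hg', -⟩ := detB d0
    have h2 := ht h
    rw [hg', hg'] at h2
    rcases DProp.le_def.mp h2 (Or.inl le_rfl) with h' | ⟨hd', -⟩
    · exact h'
    · exact absurd hd' hd
  -- Surjectivity of the pair (k, g).
  have hsurj : ∀ y : Y, (∃ x, k x = y) ∨ (∃ d, g d = y) := by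
    intro y0
    by_contra hcon
    push_neg at hcon
    obtain ⟨h1, h2⟩ := hcon
    obtain ⟨t, ht, huq⟩ := huniv DProp.{v} (fun d => ⟨g d ≤ y0⟩) (fun x => ⟨k x ≤ y0⟩)
      (fun d d' h => DProp.le_def.mpr fun h' => le_trans (hg h) h')
      (fun x x' h => DProp.le_def.mpr fun h' => le_trans (hk h) h')
      (fun S => congrArg DProp.mk (congrArg (· ≤ y0) (hcomm S)))
    have e1 : (fun y => (⟨y ≤ y0⟩ : DProp.{v})) = fun y => (⟨y < y0⟩ : DProp.{v}) := by
      refine (huq _ ⟨?_, fun d => rfl, fun x => rfl⟩).trans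
        (huq _ ⟨?_, ?_, ?_⟩).symm
      · exact fun a b h => DProp.le_def.mpr fun h' => le_trans h h'
      · exact fun a b h => DProp.le_def.mpr fun h' => lt_of_le_of_lt h h'
      · intro d
        exact congrArg DProp.mk (propext ⟨fun hlt => le_of_lt hlt,
          fun hle => lt_of_le_of_ne hle (h2 d)⟩)
      · intro x
        exact congrArg DProp.mk (propext ⟨fun hlt => le_of_lt hlt,
          fun hle => lt_of_le_of_ne hle (h1 x)⟩)
    have e2 : (y0 ≤ y0) = (y0 < y0) := congrArg DProp.prop (congrFun e1 y0)
    exact absurd (e2 ▸ le_refl y0) (lt_irrefl y0)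
  -- `U a` means `i a` lies over the interior part.
  have hUup : ∀ {a a' : A6}, a ≤ a' → (¬ ∃ x, i a = k x) → ¬ ∃ x', i a' = k x' := by
    intro a a' haa' hU hex
    obtain ⟨x', hx'⟩ := hex
    rcases hsurj (i a) with ⟨x, hx⟩ | ⟨d, hd⟩
    · exact hU ⟨x, hx.symm⟩
    · have h3 : g d ≤ k x' := by
        rw [hd, ← hx']
        exact hi haa'
      have hb := hgk h3
      exact hU ⟨f ⟨d, hb⟩, by rw [← hd, hgB d hb]⟩
  have hdU : ∀ {a : A6}, (¬ ∃ x, i a = k x) → ∃ d : SdChain n, d ∉ SdBoundary n ∧ g d = i a := by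
    intro a hU
    rcases hsurj (i a) with ⟨x, hx⟩ | ⟨d, hd⟩
    · exact absurd ⟨x, hx.symm⟩ hU
    · refine ⟨d, fun hdB => hU ⟨f ⟨d, hdB⟩, by rw [← hd, hgB d hdB]⟩, hd⟩
  -- b1 and b2 cannot both lie over the interior.
  have hnb : ¬ ((¬ ∃ x, i A6.b1 = k x) ∧ (¬ ∃ x, i A6.b2 = k x)) := by
    rintro ⟨hU1, hU2⟩
    have hUc1 : ¬ ∃ x, i A6.c1 = k x := hUup A6.b1_le_c1 hU1
    have hUc2 : ¬ ∃ x, i A6.c2 = k x := hUup A6.b1_le_c2 hU1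
    obtain ⟨d1, hd1B, hd1⟩ := hdU hU1
    obtain ⟨d2, hd2B, hd2⟩ := hdU hU2
    obtain ⟨e1, he1B, he1⟩ := hdU hUc1
    obtain ⟨e2, he2B, he2⟩ := hdU hUc2
    have h11 : d1 ≤ e1 := hgg (by rw [hd1, he1]; exact hi A6.b1_le_c1) hd1B
    have h12 : d1 ≤ e2 := hgg (by rw [hd1, he2]; exact hi A6.b1_le_c2) hd1B
    have h21 : d2 ≤ e1 := hgg (by rw [hd2, he1]; exact hi A6.b2_le_c1) hd2B
    have h22 : d2 ≤ e2 := hgg (by rw [hd2, he2]; exact hi A6.b2_le_c2) hd2B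
    set E := SdChain.cup d1 d2 e1 h11 h21 with hE
    have hw1 : A6.b1 ≤ ρ (g E) := by
      have hgle : g d1 ≤ g E := hg (SdChain.le_cup_left d1 d2 e1 h11 h21)
      calc A6.b1 = ρ (i A6.b1) := (hretr _).symm
        _ = ρ (g d1) := by rw [hd1]
        _ ≤ ρ (g E) := hρ hgle
    have hw2 : A6.b2 ≤ ρ (g E) := by
      have hgle : g d2 ≤ g E := hg (SdChain.le_cup_right d1 d2 e1 h11 h21)
      calc A6.b2 = ρ (i A6.b2) := (hretr _).symm
        _ = ρ (g d2) := by rw [hd2]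
        _ ≤ ρ (g E) := hρ hgle
    have hw3 : ρ (g E) ≤ A6.c1 := by
      have hgle : g E ≤ g e1 := hg (SdChain.cup_le h11 h21 h11 h21)
      calc ρ (g E) ≤ ρ (g e1) := hρ hgle
        _ = ρ (i A6.c1) := by rw [he1]
        _ = A6.c1 := hretr _
    have hw4 : ρ (g E) ≤ A6.c2 := by
      have hgle : g E ≤ g e2 := hg (SdChain.cup_le h11 h21 h12 h22)
      calc ρ (g E) ≤ ρ (g e2) := hρ hgle
        _ = ρ (i A6.c2) := by rw [he2]
        _ = A6.c2 := hretr _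
    exact A6.nopair _ hw1 hw2 hw3 hw4
  -- a1 and a2 lie over X.
  have ha1U : ∃ x, i A6.a1 = k x := by
    by_contra hU
    exact hnb ⟨hUup A6.a1_le_b1 hU, hUup A6.a1_le_b2 hU⟩
  have ha2U : ∃ x, i A6.a2 = k x := by
    by_contra hU
    exact hnb ⟨hUup A6.a2_le_b1 hU, hUup A6.a2_le_b2 hU⟩
  obtain ⟨xa1, hxa1⟩ := ha1U
  obtain ⟨xa2, hxa2⟩ := ha2U
  have hra1 : ρ (k xa1) = A6.a1 := by rw [← hxa1]; exact hretr _
  have hra2 : ρ (k xa2) = A6.a2 := by rw [← hxa2]; exact hretr _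
  -- key construction at rank 1
  have keyB : ∀ bj : A6, bj.rank = 1 →
      ∃ xb : X, ρ (k xb) = bj ∧ xa1 ≤ xb ∧ xa2 ≤ xb ∧
        ((∃ x, i bj = k x) → i bj = k xb) ∧
        (∀ dc : SdChain n, i bj ≤ g dc →
          ∃ (T : SdChain n) (hT : T ∈ SdBoundary n), T ≤ dc ∧ xb ≤ f ⟨T, hT⟩ ∧
            bj ≤ ρ (k (f ⟨T, hT⟩))) := by
    intro bj hbj
    by_cases hbU : ∃ x, i bj = k x
    · obtain ⟨xb, hxb⟩ := hbU
      refine ⟨xb, by rw [← hxb]; exact hretr _, ?_, ?_, fun _ => hxb, ?_⟩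
      · exact hkle (by rw [← hxa1, ← hxb]; exact hi (A6.a1_le hbj))
      · exact hkle (by rw [← hxa2, ← hxb]; exact hi (A6.a2_le hbj))
      · intro dc hdc
        rw [hxb] at hdc
        obtain ⟨T, hT, hTdc, hxT⟩ := hkg hdc
        refine ⟨T, hT, hTdc, hxT, ?_⟩
        calc bj = ρ (k xb) := by rw [← hxb]; exact (hretr _).symm
          _ ≤ ρ (k (f ⟨T, hT⟩)) := hρ (hk hxT)
    · obtain ⟨db, hdbB, hdb⟩ := hdU hbU
      have h1 : k xa1 ≤ g db := by rw [← hxa1, hdb]; exact hi (A6.a1_le hbj)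
      have h2 : k xa2 ≤ g db := by rw [← hxa2, hdb]; exact hi (A6.a2_le hbj)
      obtain ⟨w1, hw1B, hw1db, hxw1⟩ := hkg h1
      obtain ⟨w2, hw2B, hw2db, hxw2⟩ := hkg h2
      set T0 := SdChain.cup w1 w2 db hw1db hw2db with hT0
      have hT0B : T0 ∈ SdBoundary n := SdChain.cup_mem_boundary hw1db hw2db hw1B hw2B
      have hw1T0 : (⟨w1, hw1B⟩ : SdBoundary n) ≤ ⟨T0, hT0B⟩ :=
        Subtype.mk_le_mk.mpr (SdChain.le_cup_left w1 w2 db hw1db hw2db)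
      have hw2T0 : (⟨w2, hw2B⟩ : SdBoundary n) ≤ ⟨T0, hT0B⟩ :=
        Subtype.mk_le_mk.mpr (SdChain.le_cup_right w1 w2 db hw1db hw2db)
      have hrT0 : ρ (g T0) = bj := by
        refine A6.sand1 _ _ hbj ?_ ?_ ?_
        · calc A6.a1 = ρ (k xa1) := hra1.symm
            _ ≤ ρ (k (f ⟨w1, hw1B⟩)) := hρ (hk hxw1)
            _ = ρ (g w1) := by rw [hgB w1 hw1B]
            _ ≤ ρ (g T0) := hρ (hg (SdChain.le_cup_left w1 w2 db hw1db hw2db))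
        · calc A6.a2 = ρ (k xa2) := hra2.symm
            _ ≤ ρ (k (f ⟨w2, hw2B⟩)) := hρ (hk hxw2)
            _ = ρ (g w2) := by rw [hgB w2 hw2B]
            _ ≤ ρ (g T0) := hρ (hg (SdChain.le_cup_right w1 w2 db hw1db hw2db))
        · calc ρ (g T0) ≤ ρ (g db) := hρ (hg (SdChain.cup_le hw1db hw2db hw1db hw2db))
            _ = ρ (i bj) := by rw [hdb]
            _ = bj := hretr _
      refine ⟨f ⟨T0, hT0B⟩, by rw [← hgB T0 hT0B]; exact hrT0, ?_, ?_, ?_, ?_⟩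
      · exact le_trans hxw1 (hf hw1T0)
      · exact le_trans hxw2 (hf hw2T0)
      · intro hex; exact absurd hex hbU
      · intro dc hdc
        have hdbdc : db ≤ dc := hgg (by rw [hdb]; exact hdc) hdbB
        refine ⟨T0, hT0B, ?_, le_rfl, ?_⟩
        · exact SdChain.cup_le hw1db hw2db
            (fun z hz => hdbdc (hw1db hz)) (fun z hz => hdbdc (hw2db hz))
        · rw [← hgB T0 hT0B, hrT0]
  obtain ⟨xb1, hrb1, ha1b1, ha2b1, hb1k, hb1piece⟩ := keyB A6.b1 rfl
  obtain ⟨xb2, hrb2, ha1b2, ha2b2, hb2k, hb2piece⟩ := keyB A6.b2 rfl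
  -- key construction at rank 2
  have keyC : ∀ ck : A6, ck.rank = 2 →
      ∃ xc : X, ρ (k xc) = ck ∧ xb1 ≤ xc ∧ xb2 ≤ xc := by
    intro ck hck
    by_cases hcU : ∃ x, i ck = k x
    · obtain ⟨xc, hxc⟩ := hcU
      have hb1x : ∃ x, i A6.b1 = k x := by
        by_contra hn; exact (hUup (A6.b1_le hck) hn) ⟨xc, hxc⟩
      have hb2x : ∃ x, i A6.b2 = k x := by
        by_contra hn; exact (hUup (A6.b2_le hck) hn) ⟨xc, hxc⟩
      refine ⟨xc, by rw [← hxc]; exact hretr _, ?_, ?_⟩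
      · exact hkle (by rw [← hb1k hb1x, ← hxc]; exact hi (A6.b1_le hck))
      · exact hkle (by rw [← hb2k hb2x, ← hxc]; exact hi (A6.b2_le hck))
    · obtain ⟨dc, hdcB, hdc⟩ := hdU hcU
      obtain ⟨T1, hT1, hT1dc, hxbT1, hb1T1⟩ := hb1piece dc (by rw [hdc]; exact hi (A6.b1_le hck))
      obtain ⟨T2, hT2, hT2dc, hxbT2, hb2T2⟩ := hb2piece dc (by rw [hdc]; exact hi (A6.b2_le hck))
      set E := SdChain.cup T1 T2 dc hT1dc hT2dc with hEdef
      have hEB : E ∈ SdBoundary n := SdChain.cup_mem_boundary hT1dc hT2dc hT1 hT2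
      have hT1E : (⟨T1, hT1⟩ : SdBoundary n) ≤ ⟨E, hEB⟩ :=
        Subtype.mk_le_mk.mpr (SdChain.le_cup_left T1 T2 dc hT1dc hT2dc)
      have hT2E : (⟨T2, hT2⟩ : SdBoundary n) ≤ ⟨E, hEB⟩ :=
        Subtype.mk_le_mk.mpr (SdChain.le_cup_right T1 T2 dc hT1dc hT2dc)
      have hrE : ρ (g E) = ck := by
        refine A6.sand2 _ _ hck ?_ ?_ ?_
        · calc A6.b1 ≤ ρ (k (f ⟨T1, hT1⟩)) := hb1T1
            _ = ρ (g T1) := by rw [hgB T1 hT1]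
            _ ≤ ρ (g E) := hρ (hg (SdChain.le_cup_left T1 T2 dc hT1dc hT2dc))
        · calc A6.b2 ≤ ρ (k (f ⟨T2, hT2⟩)) := hb2T2
            _ = ρ (g T2) := by rw [hgB T2 hT2]
            _ ≤ ρ (g E) := hρ (hg (SdChain.le_cup_right T1 T2 dc hT1dc hT2dc))
        · calc ρ (g E) ≤ ρ (g dc) := hρ (hg (SdChain.cup_le hT1dc hT2dc hT1dc hT2dc))
            _ = ρ (i ck) := by rw [hdc]
            _ = ck := hretr _
      refine ⟨f ⟨E, hEB⟩, by rw [← hgB E hEB]; exact hrE, ?_, ?_⟩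
      · exact le_trans hxbT1 (hf hT1E)
      · exact le_trans hxbT2 (hf hT2E)
  obtain ⟨xc1, hrc1, hb1c1, hb2c1⟩ := keyC A6.c1 rfl
  obtain ⟨xc2, hrc2, hb1c2, hb2c2⟩ := keyC A6.c2 rfl
  refine ⟨fun a => match a with
      | .a1 => xa1 | .a2 => xa2 | .b1 => xb1 | .b2 => xb2 | .c1 => xc1 | .c2 => xc2,
    fun x => ρ (k x), ?_, hρ.comp hk, ?_⟩
  · exact A6.monotone_mk _ ha1b1 ha1b2 ha2b1 ha2b2 hb1c1 hb1c2 hb2c1 hb2c2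
  · intro a
    cases a
    · exact hra1
    · exact hra2
    · exact hrb1
    · exact hrb2
    · exact hrc1
    · exact hrc2
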